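/- Let B ⊆ B(G) be a von Neumann algebra, H a complex Hilbert space, and E ⊆ B(G,H) a subspace closed in the strong operator topology such that xb ∈ E and x*y ∈ B for all x, y ∈ E and b ∈ B (a concrete von Neumann B-module). Then E possesses a complete quasi orthonormal system: there is a family (e_i)_{i∈I} of elements of E such that e_i* e_j = 0 for i ≠ j, each p_i := e_i* e_i is a nonzero projection in B, and for every x ∈ E the net of finite partial sums Σ_{i∈I'} e_i e_i* x (over finite subsets I' ⊆ I) converges to x in the strong operator topology. Moreover, the family (e_i)_{i∈I} can be chosen so as to contain any prescribed family of elements of E already having these orthogonality properties. -/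

import Mathlib

/-!
Statement 2: every concrete von Neumann `B`-module `E ⊆ B(G,H)` possesses a complete
quasi orthonormal system, which may be chosen to contain any prescribed quasi
orthonormal family.
-/

open scoped InnerProductSpace
open Filter ContinuousLinearMap

noncomputable section

universe u

variable {G H : Type u}
  [NormedAddCommGroup G] [InnerProductSpace ℂ G] [CompleteSpace G]
  [NormedAddCommGroup H] [InnerProductSpace ℂ H] [CompleteSpace H]

/-- A set of operators is closed in the strong operator topology
(net/filter formulation of closedness). -/
def SOTClosed (E : Set (G →L[ℂ] H)) : Prop :=
  ∀ (l : Filter (G →L[ℂ] H)) (x : G →L[ℂ] H), l.NeBot → (∀ᶠ y in l, y ∈ E) →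
    (∀ g : G, Tendsto (fun y : G →L[ℂ] H => y g) l (nhds (x g))) → x ∈ E

set_option linter.unusedSectionVars false
set_option linter.unusedVariables false
set_option maxHeartbeats 1000000
open Topology

namespace QONSAux






lemma eq_zero_of_adjoint_comp_self {T : G →L[ℂ] H} (h : adjoint T ∘L T = 0) : T = 0 := by
  ext g
  have h1 : (⟪T g, T g⟫_ℂ) = 0 := by
    rw [← adjoint_inner_left]
    have : adjoint T (T g) = (adjoint T ∘L T) g := rfl
    rw [this, h]
    simp
  simpa using inner_self_eq_zero.mp h1

lemma comp_adjoint_comp_self {f : G →L[ℂ] H}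
    (hidem : (adjoint f ∘L f) ∘L (adjoint f ∘L f) = adjoint f ∘L f) :
    f ∘L (adjoint f ∘L f) = f := by
  have hpp : ∀ g, adjoint f (f (adjoint f (f g))) = adjoint f (f g) := by
    intro g
    have := congrArg (fun (T : G →L[ℂ] G) => T g) hidem
    simpa using this
  ext g
  simp only [comp_apply]
  have hinner : ∀ x y : G, (⟪f x, f y⟫_ℂ) = ⟪adjoint f (f x), y⟫_ℂ :=
    fun x y => (adjoint_inner_left f y (f x)).symm
  set p : G → G := fun g => adjoint f (f g) with hp
  have key : (⟪f (p g) - f g, f (p g) - f g⟫_ℂ) = 0 := by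
    rw [inner_sub_left, inner_sub_right, inner_sub_right,
      hinner (p g) (p g), hinner (p g) g, hinner g (p g), hinner g g]
    have h1 : adjoint f (f (p g)) = adjoint f (f g) := hpp g
    rw [h1]
    have h2 : (⟪adjoint f (f g), p g⟫_ℂ) = ⟪adjoint f (f g), adjoint f (f g)⟫_ℂ := rfl
    ring
  have := inner_self_eq_zero.mp key
  exact sub_eq_zero.mp this

lemma cauchySeq_of_dist_sq_le {ι : Type*} [SemilatticeSup ι] [Nonempty ι] {X : Type*}
    [PseudoMetricSpace X] {s : ι → X} {t : ι → ℝ} (ht : CauchySeq t)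
    (h : ∀ a b, a ≤ b → dist (s b) (s a) ^ 2 ≤ t b - t a) : CauchySeq s := by
  rw [Metric.cauchySeq_iff]
  intro ε hε
  obtain ⟨N, hN⟩ := (Metric.cauchySeq_iff.mp ht) ((ε / 2) ^ 2) (by positivity)
  refine ⟨N, fun m hm n hn => ?_⟩
  have key : ∀ k, N ≤ k → k ≤ m ⊔ n → dist (s (m ⊔ n)) (s k) < ε / 2 := by
    intro k hk hk2
    have h1 := h k (m ⊔ n) hk2
    have h2 : t (m ⊔ n) - t k < (ε / 2) ^ 2 := by
      have := hN (m ⊔ n) (le_trans hm le_sup_left) k hk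
      have habs : |t (m ⊔ n) - t k| < (ε / 2) ^ 2 := by
        rwa [Real.dist_eq] at this
      exact lt_of_le_of_lt (le_abs_self _) habs
    nlinarith [dist_nonneg (x := s (m ⊔ n)) (y := s k)]
  have k1 := key m hm le_sup_left
  have k2 := key n hn le_sup_right
  calc dist (s m) (s n) ≤ dist (s m) (s (m ⊔ n)) + dist (s (m ⊔ n)) (s n) := dist_triangle _ _ _
    _ < ε / 2 + ε / 2 := by rw [dist_comm (s m)]; exact add_lt_add k1 k2
    _ = ε := by ring

lemma exists_sot_limit {ι : Type*} [SemilatticeSup ι] [Nonempty ι]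
    (T : ι → G →L[ℂ] H) (C : ℝ)
    (hC : ∀ i g, ‖T i g‖ ≤ C * ‖g‖)
    (hc : ∀ g, CauchySeq fun i => T i g) :
    ∃ S : G →L[ℂ] H, ∀ g, Tendsto (fun i => T i g) atTop (𝓝 (S g)) := by
  choose L hL using fun g => cauchySeq_tendsto_of_complete (hc g)
  have hadd : ∀ g g', L (g + g') = L g + L g' := by
    intro g g'
    refine tendsto_nhds_unique (hL (g + g')) ?_
    simpa only [map_add] using (hL g).add (hL g')
  have hsmul : ∀ (c : ℂ) (g : G), L (c • g) = c • L g := by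
    intro c g
    refine tendsto_nhds_unique (hL (c • g)) ?_
    simpa only [map_smul] using (hL g).const_smul c
  have hbound : ∀ g, ‖L g‖ ≤ C * ‖g‖ := fun g =>
    le_of_tendsto (hL g).norm (Eventually.of_forall fun i => hC i g)
  exact ⟨LinearMap.mkContinuous
    { toFun := L, map_add' := hadd, map_smul' := hsmul } C hbound, hL⟩


lemma commute_cfc_of_commute {a c : G →L[ℂ] G} (ha : IsSelfAdjoint a)
    (hcomm : c * a = a * c) (f : ℝ → ℝ) (hf : ContinuousOn f (spectrum ℝ a)) :
    c * cfc f a = cfc f a * c := by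
  let Z : Subalgebra ℝ (G →L[ℂ] G) := Subalgebra.centralizer ℝ {c}
  have hZclosed : IsClosed (Z : Set (G →L[ℂ] G)) := by
    have hZ : (Z : Set (G →L[ℂ] G)) = {x | c * x = x * c} := by
      ext x
      simp [Z, Subalgebra.mem_centralizer_iff, Set.mem_centralizer_iff]
    rw [hZ]
    exact isClosed_eq (continuous_mul_left c) (continuous_mul_right c)
  let φ := (cfcHom (R := ℝ) ha).toAlgHom
  let T : Subalgebra ℝ C(spectrum ℝ a, ℝ) := Z.comap φ
  have hTclosed : IsClosed (T : Set C(spectrum ℝ a, ℝ)) := by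
    have hT : (T : Set _) = ⇑φ ⁻¹' (Z : Set _) := rfl
    rw [hT]
    exact hZclosed.preimage (cfcHom_isClosedEmbedding (R := ℝ) ha).continuous
  have hpoly : polynomialFunctions (spectrum ℝ a) ≤ T := by
    rw [polynomialFunctions.eq_adjoin_X]
    apply Algebra.adjoin_le
    intro x hx
    rw [Set.mem_singleton_iff] at hx
    subst hx
    show φ _ ∈ Z
    have hXid : (Polynomial.toContinuousMapOnAlgHom (spectrum ℝ a)) Polynomial.X
        = ContinuousMap.restrict (spectrum ℝ a) (ContinuousMap.id ℝ) := by
      ext t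
      simp [Polynomial.toContinuousMapOnAlgHom, Polynomial.toContinuousMapOn,
        Polynomial.toContinuousMap]
    rw [hXid]
    have hid : φ (ContinuousMap.restrict (spectrum ℝ a) (ContinuousMap.id ℝ)) = a :=
      cfcHom_id ha
    rw [hid, Subalgebra.mem_centralizer_iff]
    rintro g hg
    rw [Set.mem_singleton_iff] at hg
    subst hg
    exact hcomm
  have htop : T = ⊤ := by
    have h1 := Subalgebra.topologicalClosure_minimal hpoly hTclosed
    rw [polynomialFunctions.topologicalClosure] at h1
    exact top_le_iff.mp h1
  have hfT : (⟨(spectrum ℝ a).restrict f, hf.restrict⟩ : C(spectrum ℝ a, ℝ)) ∈ T := by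
    rw [htop]; trivial
  have hmem := (Subalgebra.mem_comap _ _ _).mp hfT
  have := (Subalgebra.mem_centralizer_iff ℝ).mp hmem c (Set.mem_singleton c)
  rw [cfc_apply f a ha hf]
  exact this

lemma cfc_mem_vonNeumannAlgebra (B : VonNeumannAlgebra G) {a : G →L[ℂ] G}
    (haB : a ∈ B) (ha : IsSelfAdjoint a) (f : ℝ → ℝ)
    (hf : ContinuousOn f (spectrum ℝ a)) :
    cfc f a ∈ B := by
  have hmem : cfc f a ∈ B.carrier.centralizer.centralizer := by
    rw [Set.mem_centralizer_iff]
    intro c hc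
    have hca : c * a = a * c := ((Set.mem_centralizer_iff).mp hc a haB).symm
    exact commute_cfc_of_commute ha hca f hf
  rw [B.centralizer_centralizer'] at hmem
  exact hmem


/-- Clamp function: `0` on `(-∞, ν/2]`, `1` on `[ν, ∞)`. -/
def uu (ν : ℝ) : ℝ → ℝ := fun t => min 1 (max 0 ((2 * t - ν) / ν))

/-- Iterated square roots of `uu`. -/
def ff (ν : ℝ) : ℕ → ℝ → ℝ := fun n t => Real.sqrt^[n] (uu ν t)

def ww (ν : ℝ) (n : ℕ) : ℝ → ℝ := fun t => Real.sqrt (ff ν n t / t)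

variable {ν : ℝ}

lemma uu_nonneg (t : ℝ) : 0 ≤ uu ν t := le_min zero_le_one (le_max_left _ _)

lemma uu_le_one (t : ℝ) : uu ν t ≤ 1 := min_le_left _ _

lemma uu_continuous : Continuous (uu ν) := by
  unfold uu
  fun_prop

lemma uu_eq_zero (hν : 0 < ν) {t : ℝ} (ht : t ≤ ν / 2) : uu ν t = 0 := by
  have h1 : (2 * t - ν) / ν ≤ 0 := by
    apply div_nonpos_of_nonpos_of_nonneg _ hν.le
    linarith
  unfold uu
  rw [max_eq_left h1]
  exact min_eq_right zero_le_one

lemma uu_nu (hν : 0 < ν) : uu ν ν = 1 := by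
  unfold uu
  have : (2 * ν - ν) / ν = 1 := by
    field_simp
    ring
  rw [this]
  simp

lemma ff_zero (t : ℝ) : ff ν 0 t = uu ν t := rfl

lemma ff_succ (n : ℕ) (t : ℝ) : ff ν (n + 1) t = Real.sqrt (ff ν n t) := by
  unfold ff
  rw [Function.iterate_succ_apply']

lemma ff_nonneg (n : ℕ) (t : ℝ) : 0 ≤ ff ν n t := by
  cases n with
  | zero => exact uu_nonneg t
  | succ n => rw [ff_succ]; exact Real.sqrt_nonneg _

lemma ff_le_one (n : ℕ) (t : ℝ) : ff ν n t ≤ 1 := by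
  induction n with
  | zero => exact uu_le_one t
  | succ n ih => rw [ff_succ]; exact Real.sqrt_le_one.mpr ih

lemma ff_succ_sq (n : ℕ) (t : ℝ) : ff ν (n + 1) t * ff ν (n + 1) t = ff ν n t := by
  rw [ff_succ]
  exact Real.mul_self_sqrt (ff_nonneg n t)

lemma ff_le_succ (n : ℕ) (t : ℝ) : ff ν n t ≤ ff ν (n + 1) t := by
  rw [ff_succ]
  rw [show ff ν n t = Real.sqrt (ff ν n t ^ 2) from (Real.sqrt_sq (ff_nonneg n t)).symm]
  apply Real.sqrt_le_sqrt
  rw [Real.sqrt_sq (ff_nonneg n t)]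
  nlinarith [ff_nonneg (ν := ν) n t, ff_le_one (ν := ν) n t]

lemma ff_mono {m n : ℕ} (h : m ≤ n) (t : ℝ) : ff ν m t ≤ ff ν n t := by
  induction n with
  | zero => simp_all
  | succ n ih =>
    rcases Nat.lt_or_ge m (n + 1) with h' | h'
    · exact le_trans (ih (Nat.lt_succ_iff.mp h')) (ff_le_succ n t)
    · have : m = n + 1 := le_antisymm h h'
      subst this
      exact le_refl _

lemma ff_eq_zero (hν : 0 < ν) {t : ℝ} (ht : t ≤ ν / 2) (n : ℕ) : ff ν n t = 0 := by
  induction n with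
  | zero => exact uu_eq_zero hν ht
  | succ n ih => rw [ff_succ, ih, Real.sqrt_zero]

lemma ff_continuous (n : ℕ) : Continuous (ff ν n) := by
  induction n with
  | zero => exact uu_continuous
  | succ n ih =>
    have : ff ν (n + 1) = fun t => Real.sqrt (ff ν n t) := funext fun t => ff_succ n t
    rw [this]
    exact Real.continuous_sqrt.comp ih

lemma ff_nu (hν : 0 < ν) (n : ℕ) : ff ν n ν = 1 := by
  induction n with
  | zero => exact uu_nu hν
  | succ n ih => rw [ff_succ, ih, Real.sqrt_one]

lemma ww_continuousOn (hν : 0 < ν) (n : ℕ) : ContinuousOn (ww ν n) (Set.Ici 0) := by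
  intro t₀ ht₀
  rcases lt_or_eq_of_le (Set.mem_Ici.mp ht₀) with h | h
  · apply ContinuousAt.continuousWithinAt
    apply Real.continuous_sqrt.continuousAt.comp
    exact ((ff_continuous n).continuousAt).div continuousAt_id (ne_of_gt h)
  · -- t₀ = 0
    subst h
    have hz : ∀ t ∈ Set.Ico (0 : ℝ) (ν / 2), ww ν n t = 0 := by
      intro t ht
      unfold ww
      rw [ff_eq_zero hν (le_of_lt ht.2) n, zero_div, Real.sqrt_zero]
    have hmem : Set.Ico (0 : ℝ) (ν / 2) ∈ 𝓝[Set.Ici 0] (0 : ℝ) := by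
      have : Set.Ico (0 : ℝ) (ν / 2) = Set.Ici 0 ∩ Set.Iio (ν / 2) := by
        ext z; simp [Set.mem_Ico, Set.mem_Ici, Set.mem_Iio, and_comm]
      rw [this]
      exact Filter.inter_mem self_mem_nhdsWithin
        (mem_nhdsWithin_of_mem_nhds (Iio_mem_nhds (by linarith)))
    have heq : ww ν n =ᶠ[𝓝[Set.Ici 0] (0:ℝ)] (fun _ => (0:ℝ)) :=
      Filter.eventually_of_mem hmem hz
    have hw0 : ww ν n 0 = 0 := by
      unfold ww
      rw [div_zero, Real.sqrt_zero]
    exact (continuousWithinAt_const (b := (0:ℝ))).congr_of_eventuallyEq heq hw0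

lemma t_mul_ww_sq (hν : 0 < ν) (n : ℕ) {t : ℝ} (ht : 0 ≤ t) :
    t * (ww ν n t * ww ν n t) = ff ν n t := by
  rcases eq_or_lt_of_le ht with h | h
  · rw [← h]
    rw [ff_eq_zero hν (by linarith) n]
    ring
  · unfold ww
    rw [Real.mul_self_sqrt (div_nonneg (ff_nonneg n t) ht)]
    field_simp

lemma ww_diff_sq (hν : 0 < ν) {m n : ℕ} (hmn : m ≤ n) {t : ℝ} (ht : 0 ≤ t) :
    t * ((ww ν n t - ww ν m t) * (ww ν n t - ww ν m t)) ≤ ff ν n t - ff ν m t := by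
  rcases eq_or_lt_of_le ht with h | h
  · rw [← h, ff_eq_zero hν (by linarith) n, ff_eq_zero hν (by linarith) m]
    ring_nf
    simp
  · have hsqrt_t : Real.sqrt t * Real.sqrt t = t := Real.mul_self_sqrt ht
    have hw : ∀ k, ww ν k t = Real.sqrt (ff ν k t) / Real.sqrt t := fun k =>
      Real.sqrt_div (ff_nonneg k t) t
    rw [hw n, hw m, div_sub_div_same]
    have hst : (0:ℝ) < Real.sqrt t := Real.sqrt_pos.mpr h
    rw [div_mul_div_comm, hsqrt_t]
    rw [mul_div_assoc']
    rw [mul_comm t _, mul_div_assoc, div_self (ne_of_gt h), mul_one]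
    nlinarith [Real.mul_self_sqrt (ff_nonneg (ν := ν) n t),
      Real.mul_self_sqrt (ff_nonneg (ν := ν) m t),
      Real.sqrt_le_sqrt (ff_mono (ν := ν) hmn t),
      Real.sqrt_nonneg (ff ν m t)]


lemma le_of_sq_le_sq {x y : ℝ} (hx : 0 ≤ x) (hy : 0 ≤ y) (h : x ^ 2 ≤ y ^ 2) : x ≤ y := by
  nlinarith

lemma exists_new_element (B : VonNeumannAlgebra G) (E : Set (G →L[ℂ] H))
    (hclosed : SOTClosed E)
    (hmod : ∀ x ∈ E, ∀ b ∈ B, x ∘L b ∈ E)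
    (hinner : ∀ x ∈ E, ∀ y ∈ E, (adjoint x) ∘L y ∈ B)
    {x' : G →L[ℂ] H} (hx'E : x' ∈ E) (hx'ne : x' ≠ 0) :
    ∃ e : G →L[ℂ] H, e ∈ E ∧
      ((adjoint e ∘L e) ∘L (adjoint e ∘L e) = adjoint e ∘L e) ∧
      adjoint e ∘L e ≠ 0 ∧
      (∀ f : G →L[ℂ] H, adjoint f ∘L x' = 0 → adjoint f ∘L e = 0) := by
  set a : G →L[ℂ] G := adjoint x' ∘L x' with ha_def
  have haB : a ∈ B := hinner x' hx'E x' hx'E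
  have hasa : IsSelfAdjoint a := by
    rw [ContinuousLinearMap.isSelfAdjoint_iff', ha_def, adjoint_comp, adjoint_adjoint]
  have hinner_a : ∀ u v : G, (⟪u, a v⟫_ℂ) = ⟪x' u, x' v⟫_ℂ := by
    intro u v
    have h : a v = adjoint x' (x' v) := rfl
    rw [h]
    exact adjoint_inner_right x' u (x' v)
  have hsa_inner : ∀ (b : G →L[ℂ] G), IsSelfAdjoint b → ∀ (u v : G),
      (⟪b u, v⟫_ℂ) = ⟪u, b v⟫_ℂ := by
    intro b hb u v
    conv_lhs => rw [← hb.adjoint_eq]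
    exact adjoint_inner_left b v u
  have hapos : (0 : G →L[ℂ] G) ≤ a := by
    rw [ContinuousLinearMap.nonneg_iff_isPositive]
    refine ⟨ContinuousLinearMap.isSelfAdjoint_iff_isSymmetric.mp hasa, fun g => ?_⟩
    have h1 : a.reApplyInnerSelf g = RCLike.re (⟪a g, g⟫_ℂ) := rfl
    have h2 : (⟪a g, g⟫_ℂ) = ⟪x' g, x' g⟫_ℂ := adjoint_inner_left x' g (x' g)
    rw [h1, h2, inner_self_eq_norm_sq]
    positivity
  have hane : a ≠ 0 := by
    intro h0
    exact hx'ne (eq_zero_of_adjoint_comp_self (ha_def ▸ h0))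
  have hnontriv : Nontrivial (G →L[ℂ] G) := ⟨⟨a, 0, hane⟩⟩
  set ν : ℝ := ‖a‖ with hν_def
  have hν : 0 < ν := norm_pos_iff.mpr hane
  have hspec_sub : spectrum ℝ a ⊆ Set.Ici 0 := fun t ht =>
    Set.mem_Ici.mpr (spectrum_nonneg_of_nonneg hapos ht)
  have hν_mem : ν ∈ spectrum ℝ a := CStarAlgebra.norm_mem_spectrum_of_nonneg hapos
  have hff_cont : ∀ n, ContinuousOn (ff ν n) (spectrum ℝ a) := fun n =>
    (ff_continuous n).continuousOn
  have hww_cont : ∀ n, ContinuousOn (ww ν n) (spectrum ℝ a) := fun n =>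
    (ww_continuousOn hν n).mono hspec_sub
  set A : ℕ → G →L[ℂ] G := fun n => cfc (ff ν n) a with hA_def
  set W : ℕ → G →L[ℂ] G := fun n => cfc (ww ν n) a with hW_def
  have hWB : ∀ n, W n ∈ B := fun n => cfc_mem_vonNeumannAlgebra B haB hasa _ (hww_cont n)
  -- master inner-product identity
  have hmaster : ∀ (wf : ℝ → ℝ), ContinuousOn wf (spectrum ℝ a) → ∀ g' g : G,
      (⟪x' (cfc wf a g'), x' (cfc wf a g)⟫_ℂ)
        = ⟪g', cfc (fun t => wf t * (t * wf t)) a g⟫_ℂ := by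
    intro wf hwf g' g
    have hwsa : IsSelfAdjoint (cfc wf a) := cfc_predicate _ a
    have h2 : cfc (fun t : ℝ => t * wf t) a = a * cfc wf a := by
      rw [cfc_mul (fun t : ℝ => t) wf a continuous_id.continuousOn hwf, cfc_id' ℝ a hasa]
    have h3 : cfc (fun t => wf t * (t * wf t)) a = cfc wf a * (a * cfc wf a) := by
      rw [cfc_mul wf (fun t => t * wf t) a hwf (continuous_id.continuousOn.mul hwf), h2]
    calc (⟪x' (cfc wf a g'), x' (cfc wf a g)⟫_ℂ)
        = ⟪cfc wf a g', a (cfc wf a g)⟫_ℂ := (hinner_a _ _).symm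
      _ = ⟪g', cfc wf a (a (cfc wf a g))⟫_ℂ := hsa_inner _ hwsa _ _
      _ = ⟪g', cfc (fun t => wf t * (t * wf t)) a g⟫_ℂ := by
          rw [h3, ContinuousLinearMap.mul_apply, ContinuousLinearMap.mul_apply]
  -- squared-norm identity
  have hsq_cfc : ∀ (f : ℝ → ℝ), ContinuousOn f (spectrum ℝ a) → ∀ g : G,
      ‖cfc f a g‖ ^ 2 = RCLike.re (⟪g, cfc (fun t => f t * f t) a g⟫_ℂ) := by
    intro f hf g
    rw [← inner_self_eq_norm_sq (𝕜 := ℂ)]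
    congr 1
    calc (⟪cfc f a g, cfc f a g⟫_ℂ)
        = ⟪g, cfc f a (cfc f a g)⟫_ℂ := hsa_inner _ (cfc_predicate _ a) _ _
      _ = ⟪g, (cfc f a * cfc f a) g⟫_ℂ := by rw [ContinuousLinearMap.mul_apply]
      _ = ⟪g, cfc (fun t => f t * f t) a g⟫_ℂ := by rw [← cfc_mul f f a hf hf]
  -- monotonicity of quadratic forms
  have hform_mono : ∀ (f₁ f₂ : ℝ → ℝ), ContinuousOn f₁ (spectrum ℝ a) →
      ContinuousOn f₂ (spectrum ℝ a) →
      (∀ t ∈ spectrum ℝ a, f₁ t ≤ f₂ t) → ∀ g : G,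
      RCLike.re (⟪g, cfc f₁ a g⟫_ℂ) ≤ RCLike.re (⟪g, cfc f₂ a g⟫_ℂ) := by
    intro f₁ f₂ h₁ h₂ hle g
    have hcle : cfc f₁ a ≤ cfc f₂ a := cfc_mono hle h₁ h₂
    have hpos := (ContinuousLinearMap.le_def _ _).mp hcle
    have hnn := hpos.re_inner_nonneg_left g
    have hsplit : RCLike.re (⟪(cfc f₂ a - cfc f₁ a) g, g⟫_ℂ)
        = RCLike.re (⟪g, cfc f₂ a g⟫_ℂ) - RCLike.re (⟪g, cfc f₁ a g⟫_ℂ) := by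
      rw [ContinuousLinearMap.sub_apply, inner_sub_left,
        hsa_inner _ (cfc_predicate _ a) g g, hsa_inner _ (cfc_predicate _ a) g g, map_sub]
    rw [hsplit] at hnn
    linarith
  have hform_le_one : ∀ (f : ℝ → ℝ), ContinuousOn f (spectrum ℝ a) →
      (∀ t ∈ spectrum ℝ a, f t ≤ 1) → ∀ g : G,
      RCLike.re (⟪g, cfc f a g⟫_ℂ) ≤ ‖g‖ ^ 2 := by
    intro f hf hle g
    have h := hform_mono f (fun _ => 1) hf continuousOn_const hle g
    rwa [cfc_const_one ℝ a hasa, ContinuousLinearMap.one_apply, inner_self_eq_norm_sq] at h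
  -- φ sequence
  have hφ_mono : ∀ g : G, Monotone (fun n => RCLike.re (⟪g, A n g⟫_ℂ)) := by
    intro g m n hmn
    exact hform_mono _ _ (hff_cont m) (hff_cont n) (fun t _ => ff_mono hmn t) g
  have hφ_bdd : ∀ (g : G) (n : ℕ), RCLike.re (⟪g, A n g⟫_ℂ) ≤ ‖g‖ ^ 2 := fun g n =>
    hform_le_one _ (hff_cont n) (fun t _ => ff_le_one n t) g
  have hφ_cauchy : ∀ g : G, CauchySeq (fun n => RCLike.re (⟪g, A n g⟫_ℂ)) := by
    intro g
    refine (tendsto_atTop_ciSup (hφ_mono g) ⟨‖g‖ ^ 2, ?_⟩).cauchySeq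
    rintro y ⟨n, rfl⟩
    exact hφ_bdd g n
  have hφ_diff : ∀ (m n : ℕ) (g : G),
      RCLike.re (⟪g, cfc (fun t => ff ν n t - ff ν m t) a g⟫_ℂ)
      = RCLike.re (⟪g, A n g⟫_ℂ) - RCLike.re (⟪g, A m g⟫_ℂ) := by
    intro m n g
    simp only [hA_def]
    rw [cfc_sub _ _ a (hff_cont n) (hff_cont m), ContinuousLinearMap.sub_apply,
      inner_sub_right, map_sub]
  -- SOT limit of A
  have hA_cauchy : ∀ g : G, CauchySeq (fun n => A n g) := by
    intro g
    apply cauchySeq_of_dist_sq_le (hφ_cauchy g)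
    intro m n hmn
    have hd_cont : ContinuousOn (fun t => ff ν n t - ff ν m t) (spectrum ℝ a) :=
      (hff_cont n).sub (hff_cont m)
    have hsub : A n g - A m g = cfc (fun t => ff ν n t - ff ν m t) a g := by
      simp only [hA_def]
      rw [cfc_sub _ _ a (hff_cont n) (hff_cont m), ContinuousLinearMap.sub_apply]
    rw [dist_eq_norm, hsub, hsq_cfc _ hd_cont g]
    have h2 := hform_mono _ _ (hd_cont.mul hd_cont) hd_cont
      (fun t _ => by
        have a1 : ff ν m t ≤ ff ν n t := ff_mono hmn t
        have a2 : 0 ≤ ff ν m t := ff_nonneg m t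
        have a3 : ff ν n t ≤ 1 := ff_le_one n t
        simp only [Pi.mul_apply]
        nlinarith) g
    rw [hφ_diff m n g] at h2
    exact h2
  have hA_bdd : ∀ (n : ℕ) (g : G), ‖A n g‖ ≤ 1 * ‖g‖ := by
    intro n g
    rw [one_mul]
    refine le_of_sq_le_sq (norm_nonneg _) (norm_nonneg _) ?_
    simp only [hA_def]
    rw [hsq_cfc _ (hff_cont n) g]
    exact hform_le_one _ ((hff_cont n).mul (hff_cont n))
        (fun t _ => by
          have a1 : ff ν n t ≤ 1 := ff_le_one n t
          have a2 : 0 ≤ ff ν n t := ff_nonneg n t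
          simp only [Pi.mul_apply]
          nlinarith) g
  obtain ⟨qA, hqA⟩ := exists_sot_limit A 1 hA_bdd hA_cauchy
  -- E n := x' ∘L W n
  have hE_inner : ∀ (n : ℕ) (g' g : G), (⟪x' (W n g'), x' (W n g)⟫_ℂ) = ⟪g', A n g⟫_ℂ := by
    intro n g' g
    simp only [hA_def, hW_def]
    rw [hmaster _ (hww_cont n) g' g]
    have hcc : cfc (fun t => ww ν n t * (t * ww ν n t)) a = cfc (ff ν n) a := by
      apply cfc_congr
      intro t ht
      have h0 : (0:ℝ) ≤ t := Set.mem_Ici.mp (hspec_sub ht)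
      have h1 := t_mul_ww_sq hν n h0
      dsimp only
      nlinarith
    rw [hcc]
  have hE_cauchy : ∀ g : G, CauchySeq (fun n => x' (W n g)) := by
    intro g
    apply cauchySeq_of_dist_sq_le (hφ_cauchy g)
    intro m n hmn
    have hd_cont : ContinuousOn (fun t => ww ν n t - ww ν m t) (spectrum ℝ a) :=
      (hww_cont n).sub (hww_cont m)
    have hsub : x' (W n g) - x' (W m g) = x' (cfc (fun t => ww ν n t - ww ν m t) a g) := by
      simp only [hW_def]
      rw [cfc_sub _ _ a (hww_cont n) (hww_cont m), ContinuousLinearMap.sub_apply, map_sub]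
    rw [dist_eq_norm, hsub, ← inner_self_eq_norm_sq (𝕜 := ℂ), hmaster _ hd_cont g g]
    have h2 := hform_mono (fun t => (ww ν n t - ww ν m t) * (t * (ww ν n t - ww ν m t)))
      (fun t => ff ν n t - ff ν m t)
      (hd_cont.mul (continuous_id.continuousOn.mul hd_cont)) ((hff_cont n).sub (hff_cont m))
      (fun t ht => by
        have h0 : (0:ℝ) ≤ t := Set.mem_Ici.mp (hspec_sub ht)
        have h1 := ww_diff_sq hν hmn (t := t) h0
        nlinarith [h1]) g
    rw [hφ_diff m n g] at h2
    exact h2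
  have hE_bdd : ∀ (n : ℕ) (g : G), ‖x' (W n g)‖ ≤ 1 * ‖g‖ := by
    intro n g
    rw [one_mul]
    refine le_of_sq_le_sq (norm_nonneg _) (norm_nonneg _) ?_
    rw [← inner_self_eq_norm_sq (𝕜 := ℂ), hE_inner n g g]
    exact hφ_bdd g n
  obtain ⟨e, he⟩ := exists_sot_limit (fun n => x' ∘L W n) 1 hE_bdd hE_cauchy
  have heE : e ∈ E := by
    apply hclosed (Filter.map (fun n => x' ∘L W n) atTop) e Filter.map_neBot
    · exact Filter.eventually_map.mpr (Eventually.of_forall fun n => hmod x' hx'E (W n) (hWB n))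
    · intro g
      rw [tendsto_map'_iff]
      exact he g
  set q : G →L[ℂ] G := adjoint e ∘L e with hq_def
  have hqsa : IsSelfAdjoint q := by
    rw [ContinuousLinearMap.isSelfAdjoint_iff', hq_def, adjoint_comp, adjoint_adjoint]
  have hq_inner : ∀ g' g : G, (⟪g', q g⟫_ℂ) = ⟪e g', e g⟫_ℂ := by
    intro g' g
    have h : q g = adjoint e (e g) := rfl
    rw [h]
    exact adjoint_inner_right e g' (e g)
  have hkey : ∀ g' g : G, Tendsto (fun n => (⟪g', A n g⟫_ℂ)) atTop (𝓝 (⟪g', q g⟫_ℂ)) := by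
    intro g' g
    have h1 := Filter.Tendsto.inner (𝕜 := ℂ) (he g') (he g)
    rw [hq_inner g' g]
    have h2 : (fun n => (⟪g', A n g⟫_ℂ)) = fun n => ⟪(x' ∘L W n) g', (x' ∘L W n) g⟫_ℂ := by
      funext n
      exact (hE_inner n g' g).symm
    rw [h2]
    exact h1
  have hqA_eq : qA = q := by
    ext g
    apply ext_inner_left ℂ
    intro g'
    exact tendsto_nhds_unique (Filter.Tendsto.inner (𝕜 := ℂ) tendsto_const_nhds (hqA g)) (hkey g' g)
  have hshift : ∀ (g' g : G) (n : ℕ), (⟪A (n+1) g', A (n+1) g⟫_ℂ) = ⟪g', A n g⟫_ℂ := by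
    intro g' g n
    calc (⟪A (n+1) g', A (n+1) g⟫_ℂ)
        = ⟪g', A (n+1) (A (n+1) g)⟫_ℂ := hsa_inner _ (cfc_predicate _ a) _ _
      _ = ⟪g', (A (n+1) * A (n+1)) g⟫_ℂ := by rw [ContinuousLinearMap.mul_apply]
      _ = ⟪g', A n g⟫_ℂ := by
          have hAA : A (n+1) * A (n+1) = A n := by
            simp only [hA_def]
            rw [← cfc_mul _ _ a (hff_cont (n+1)) (hff_cont (n+1))]
            exact cfc_congr fun t _ => ff_succ_sq n t
          rw [hAA]
  have hqq : ∀ g' g : G, (⟪g', q (q g)⟫_ℂ) = ⟪g', q g⟫_ℂ := by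
    intro g' g
    have hL : Tendsto (fun n => (⟪A n g', A n g⟫_ℂ)) atTop (𝓝 (⟪q g', q g⟫_ℂ)) := by
      rw [← hqA_eq]
      exact Filter.Tendsto.inner (𝕜 := ℂ) (hqA g') (hqA g)
    have hLshift : Tendsto (fun n => (⟪A (n+1) g', A (n+1) g⟫_ℂ)) atTop
        (𝓝 (⟪q g', q g⟫_ℂ)) := hL.comp (tendsto_add_atTop_nat 1)
    have hL2 : Tendsto (fun n => (⟪g', A n g⟫_ℂ)) atTop (𝓝 (⟪q g', q g⟫_ℂ)) := by
      have h2 : (fun n => (⟪A (n+1) g', A (n+1) g⟫_ℂ)) = fun n => ⟪g', A n g⟫_ℂ := by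
        funext n
        exact hshift g' g n
      rwa [h2] at hLshift
    calc (⟪g', q (q g)⟫_ℂ) = ⟪q g', q g⟫_ℂ := (hsa_inner q hqsa g' (q g)).symm
      _ = ⟪g', q g⟫_ℂ := tendsto_nhds_unique hL2 (hkey g' g)
  have hidem : q ∘L q = q := by
    ext g
    apply ext_inner_left ℂ
    intro g'
    exact hqq g' g
  have hA0 : A 0 = cfc (uu ν) a := by
    simp only [hA_def]
    rfl
  have hcuu_ne : cfc (uu ν) a ≠ 0 := by
    intro h0
    have h1 : (1:ℝ) ∈ spectrum ℝ (cfc (uu ν) a) := by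
      rw [cfc_map_spectrum _ a hasa uu_continuous.continuousOn]
      exact ⟨ν, hν_mem, uu_nu hν⟩
    rw [h0, spectrum.zero_eq] at h1
    exact one_ne_zero (Set.mem_singleton_iff.mp h1)
  have hcuu_pos : (0 : G →L[ℂ] G) ≤ cfc (uu ν) a := cfc_nonneg fun t _ => uu_nonneg t
  obtain ⟨g₀, hg₀⟩ : ∃ g₀ : G, 0 < RCLike.re (⟪g₀, cfc (uu ν) a g₀⟫_ℂ) := by
    by_contra hcon
    push_neg at hcon
    apply hcuu_ne
    have hpos := (ContinuousLinearMap.nonneg_iff_isPositive _).mp hcuu_pos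
    have hzero : ∀ g : G, RCLike.re (⟪g, cfc (uu ν) a g⟫_ℂ) = 0 := by
      intro g
      have h1 := hpos.re_inner_nonneg_left g
      rw [hsa_inner _ (cfc_predicate _ a) g g] at h1
      exact le_antisymm (hcon g) h1
    have hzero' : ∀ g : G, (⟪(cfc (uu ν) a) g, g⟫_ℂ) = 0 := by
      intro g
      have him : (⟪cfc (uu ν) a g, g⟫_ℂ) = ⟪g, cfc (uu ν) a g⟫_ℂ :=
        hsa_inner _ (cfc_predicate _ a) g g
      set z := (⟪g, cfc (uu ν) a g⟫_ℂ) with hz_def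
      have hconj : (starRingEnd ℂ) z = ⟪cfc (uu ν) a g, g⟫_ℂ := inner_conj_symm _ _
      have hre : z.re = 0 := hzero g
      have him0 : z.im = 0 := by
        have h3 : z = starRingEnd ℂ z := by
          rw [hconj, him]
        have := congrArg Complex.im h3
        simp only [Complex.conj_im] at this
        linarith
      rw [him]
      exact Complex.ext hre him0
    have hlin := (inner_map_self_eq_zero
      ((cfc (uu ν) a : G →L[ℂ] G) : G →ₗ[ℂ] G)).mp (fun x => hzero' x)
    apply ContinuousLinearMap.coe_injective
    rw [hlin]
    rfl
  have hq_pos : 0 < RCLike.re (⟪g₀, q g₀⟫_ℂ) := by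
    have ht : Tendsto (fun n => RCLike.re (⟪g₀, A n g₀⟫_ℂ)) atTop
        (𝓝 (RCLike.re (⟪g₀, q g₀⟫_ℂ))) :=
      (RCLike.continuous_re.tendsto _).comp (hkey g₀ g₀)
    have hge : RCLike.re (⟪g₀, cfc (uu ν) a g₀⟫_ℂ) ≤ RCLike.re (⟪g₀, q g₀⟫_ℂ) := by
      apply ge_of_tendsto ht
      apply Eventually.of_forall
      intro n
      rw [← hA0]
      exact hφ_mono g₀ (Nat.zero_le n)
    exact lt_of_lt_of_le hg₀ hge
  have hqne : q ≠ 0 := by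
    intro h0
    rw [h0] at hq_pos
    simp at hq_pos
  have horth : ∀ f : G →L[ℂ] H, adjoint f ∘L x' = 0 → adjoint f ∘L e = 0 := by
    intro f hf
    ext g
    have h1 : Tendsto (fun n => adjoint f ((x' ∘L W n) g)) atTop (𝓝 (adjoint f (e g))) :=
      ((adjoint f).continuous.tendsto _).comp (he g)
    have h2 : (fun n => adjoint f ((x' ∘L W n) g)) = fun _ => (0 : G) := by
      funext n
      have h3 : adjoint f ((x' ∘L W n) g) = (adjoint f ∘L x') (W n g) := rfl
      rw [h3, hf, ContinuousLinearMap.zero_apply]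
    rw [h2] at h1
    have h4 := tendsto_nhds_unique h1 tendsto_const_nhds
    simp only [ContinuousLinearMap.comp_apply, ContinuousLinearMap.zero_apply]
    exact h4
  exact ⟨e, heE, hidem, hqne, horth⟩

lemma swap_orth {f g : G →L[ℂ] H} (h : adjoint f ∘L g = 0) : adjoint g ∘L f = 0 := by
  ext v
  apply ext_inner_left ℂ
  intro u
  have h1 : (⟪u, (adjoint g ∘L f) v⟫_ℂ) = ⟪g u, f v⟫_ℂ := adjoint_inner_right g u (f v)
  have h2 : (⟪adjoint f (g u), v⟫_ℂ) = ⟪g u, f v⟫_ℂ := adjoint_inner_left f v (g u)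
  have h3 : adjoint f (g u) = 0 := by
    have h4 : adjoint f (g u) = (adjoint f ∘L g) u := rfl
    rw [h4, h, ContinuousLinearMap.zero_apply]
  rw [h1, ← h2, h3]
  simp

lemma norm_sum_sq_of_orthogonal {ι : Type*} (v : ι → H)
    (horth : ∀ i j, i ≠ j → (⟪v i, v j⟫_ℂ) = 0) (s : Finset ι) :
    ‖∑ i ∈ s, v i‖ ^ 2 = ∑ i ∈ s, ‖v i‖ ^ 2 := by
  have h1 : (⟪∑ i ∈ s, v i, ∑ j ∈ s, v j⟫_ℂ) = ∑ i ∈ s, ⟪v i, v i⟫_ℂ := by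
    rw [sum_inner]
    apply Finset.sum_congr rfl
    intro i hi
    rw [inner_sum]
    exact Finset.sum_eq_single i (fun j _ hj => horth i j (Ne.symm hj))
      (fun h => absurd hi h)
  have h2 := congrArg RCLike.re h1
  rw [inner_self_eq_norm_sq, map_sum] at h2
  rw [h2]
  exact Finset.sum_congr rfl fun i _ => inner_self_eq_norm_sq (v i)

lemma bessel_bound {ι : Type*} (v : ι → H) (w : H)
    (horth : ∀ i j, i ≠ j → (⟪v i, v j⟫_ℂ) = 0)
    (hip : ∀ i, (⟪v i, v i⟫_ℂ) = ⟪w, v i⟫_ℂ) (s : Finset ι) :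
    ∑ i ∈ s, ‖v i‖ ^ 2 ≤ ‖w‖ ^ 2 := by
  have hsum : ∑ i ∈ s, ‖v i‖ ^ 2 = RCLike.re (⟪w, ∑ i ∈ s, v i⟫_ℂ) := by
    rw [inner_sum, map_sum]
    apply Finset.sum_congr rfl
    intro i _
    rw [← hip i, inner_self_eq_norm_sq]
  have h1 : RCLike.re (⟪w, ∑ i ∈ s, v i⟫_ℂ) ≤ ‖w‖ * ‖∑ i ∈ s, v i‖ := by
    refine le_trans (RCLike.re_le_norm _) ?_
    exact norm_inner_le_norm w _
  have h2 : ‖∑ i ∈ s, v i‖ ^ 2 = ∑ i ∈ s, ‖v i‖ ^ 2 := norm_sum_sq_of_orthogonal v horth s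
  nlinarith [norm_nonneg (∑ i ∈ s, v i), norm_nonneg w,
    sq_nonneg (‖∑ i ∈ s, v i‖ - ‖w‖)]

lemma cauchySeq_partial_sums {ι : Type*} (v : ι → H) (C : ℝ)
    (horth : ∀ i j, i ≠ j → (⟪v i, v j⟫_ℂ) = 0)
    (hbdd : ∀ s : Finset ι, ∑ i ∈ s, ‖v i‖ ^ 2 ≤ C) :
    CauchySeq (fun s : Finset ι => ∑ i ∈ s, v i) := by
  classical
  have hsummable : Summable (fun i => ‖v i‖ ^ 2) :=
    summable_of_sum_le (fun i => by positivity) hbdd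
  apply cauchySeq_of_dist_sq_le (t := fun s : Finset ι => ∑ i ∈ s, ‖v i‖ ^ 2)
  · exact hsummable.hasSum.cauchySeq
  · intro s₁ s₂ hsub
    rw [dist_eq_norm]
    have hs : ∑ i ∈ s₂, v i - ∑ i ∈ s₁, v i = ∑ i ∈ s₂ \ s₁, v i := by
      rw [← Finset.sum_sdiff hsub]
      simp
    have ht : (∑ i ∈ s₂, ‖v i‖ ^ 2) - ∑ i ∈ s₁, ‖v i‖ ^ 2 = ∑ i ∈ s₂ \ s₁, ‖v i‖ ^ 2 := by
      rw [← Finset.sum_sdiff hsub (f := fun i => ‖v i‖ ^ 2)]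
      simp
    rw [hs, ht, norm_sum_sq_of_orthogonal v horth]

end QONSAux

open QONSAux

/-- **Existence of complete quasi orthonormal systems in von Neumann modules.**
Let `B ⊆ B(G)` be a von Neumann algebra and `E ⊆ B(G,H)` a strongly closed subspace with
`E·B ⊆ E` and `E*·E ⊆ B` (a concrete von Neumann `B`-module).  Then, given any family
`e₀ : I₀ → E` with `e₀ i* e₀ j = 0` for `i ≠ j` and each `e₀ i* e₀ i` a nonzero projection,
there is a complete quasi orthonormal system `e : I → E` containing the prescribed
family: the `e i` are mutually orthogonal, each `p i = e i* e i` is a nonzero projection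
belonging to `B`, and for every `x ∈ E` the net of finite partial sums
`∑_{i ∈ I'} e i (e i)* x` converges to `x` in the strong operator topology. -/
theorem exists_complete_quasi_orthonormal_system
    (B : VonNeumannAlgebra G) (E : Set (G →L[ℂ] H))
    (hzero : (0 : G →L[ℂ] H) ∈ E)
    (hadd : ∀ x ∈ E, ∀ y ∈ E, x + y ∈ E)
    (hsmul : ∀ (c : ℂ), ∀ x ∈ E, c • x ∈ E)
    (hclosed : SOTClosed E)
    (hmod : ∀ x ∈ E, ∀ b ∈ B, x ∘L b ∈ E)
    (hinner : ∀ x ∈ E, ∀ y ∈ E, (adjoint x) ∘L y ∈ B)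
    {I₀ : Type u} (e₀ : I₀ → (G →L[ℂ] H))
    (he₀mem : ∀ i, e₀ i ∈ E)
    (he₀orth : ∀ i j, i ≠ j → (adjoint (e₀ i)) ∘L (e₀ j) = 0)
    (he₀idem : ∀ i, ((adjoint (e₀ i)) ∘L (e₀ i)) ∘L ((adjoint (e₀ i)) ∘L (e₀ i))
      = (adjoint (e₀ i)) ∘L (e₀ i))
    (he₀ne : ∀ i, (adjoint (e₀ i)) ∘L (e₀ i) ≠ 0) :
    ∃ (I : Type u) (e : I → (G →L[ℂ] H)) (ι : I₀ → I),
      Function.Injective ι ∧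
      (∀ i, e (ι i) = e₀ i) ∧
      (∀ i, e i ∈ E) ∧
      (∀ i j, i ≠ j → (adjoint (e i)) ∘L (e j) = 0) ∧
      (∀ i, ((adjoint (e i)) ∘L (e i)) ∘L ((adjoint (e i)) ∘L (e i))
        = (adjoint (e i)) ∘L (e i)) ∧
      (∀ i, (adjoint (e i)) ∘L (e i) ≠ 0) ∧
      (∀ i, (adjoint (e i)) ∘L (e i) ∈ B) ∧
      (∀ x ∈ E, ∀ g : G,
        Tendsto (fun s : Finset I => ∑ i ∈ s, (e i) ((adjoint (e i)) (x g)))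
          atTop (nhds (x g))) := by

  classical
  set 𝒮 : Set (Set (G →L[ℂ] H)) := {M | M ⊆ E ∧
      (∀ f ∈ M, ∀ f' ∈ M, f ≠ f' → adjoint f ∘L f' = 0) ∧
      (∀ f ∈ M, (adjoint f ∘L f) ∘L (adjoint f ∘L f) = adjoint f ∘L f) ∧
      (∀ f ∈ M, adjoint f ∘L f ≠ 0)} with h𝒮
  have hM₀ : Set.range e₀ ∈ 𝒮 := by
    refine ⟨?_, ?_, ?_, ?_⟩
    · rintro f ⟨i, rfl⟩
      exact he₀mem i
    · rintro f ⟨i, rfl⟩ f' ⟨j, rfl⟩ hne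
      exact he₀orth i j (fun h => hne (by rw [h]))
    · rintro f ⟨i, rfl⟩
      exact he₀idem i
    · rintro f ⟨i, rfl⟩
      exact he₀ne i
  obtain ⟨M, hsub₀, hMmax⟩ := zorn_subset_nonempty 𝒮 (by
    intro c hc hchain hcne
    refine ⟨⋃₀ c, ⟨?_, ?_, ?_, ?_⟩, fun s hs => Set.subset_sUnion_of_mem hs⟩
    · rintro f ⟨s, hs, hfs⟩
      exact (hc hs).1 hfs
    · rintro f ⟨s, hs, hfs⟩ f' ⟨s', hs', hfs'⟩ hne
      rcases hchain.total hs hs' with hss | hss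
      · exact (hc hs').2.1 f (hss hfs) f' hfs' hne
      · exact (hc hs).2.1 f hfs f' (hss hfs') hne
    · rintro f ⟨s, hs, hfs⟩
      exact (hc hs).2.2.1 f hfs
    · rintro f ⟨s, hs, hfs⟩
      exact (hc hs).2.2.2 f hfs) (Set.range e₀) hM₀
  obtain ⟨hME, hMorth, hMidem, hMne⟩ := hMmax.prop
  have hMp : ∀ f ∈ M, f ∘L (adjoint f ∘L f) = f := fun f hf =>
    comp_adjoint_comp_self (hMidem f hf)
  have hpf : ∀ f ∈ M, (adjoint f ∘L f) ∘L adjoint f = adjoint f := by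
    intro f hf
    have hpsa : adjoint (adjoint f ∘L f) = adjoint f ∘L f := by
      rw [adjoint_comp, adjoint_adjoint]
    calc (adjoint f ∘L f) ∘L adjoint f = adjoint (f ∘L (adjoint f ∘L f)) := by
          rw [adjoint_comp, hpsa]
      _ = adjoint f := by rw [hMp f hf]
  -- completeness of the maximal family
  have hcomplete : ∀ x ∈ E, ∀ g : G,
      Tendsto (fun s : Finset M => ∑ i ∈ s, (i : G →L[ℂ] H) ((adjoint (i : G →L[ℂ] H)) (x g)))
        atTop (𝓝 (x g)) := by
    intro x hx
    set T : Finset ↥M → (G →L[ℂ] H) :=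
      fun s => ∑ i ∈ s, ((i : G →L[ℂ] H) ∘L (adjoint (i : G →L[ℂ] H) ∘L x)) with hT_def
    have hT_apply : ∀ (s : Finset ↥M) (g : G),
        T s g = ∑ i ∈ s, (i : G →L[ℂ] H) ((adjoint (i : G →L[ℂ] H)) (x g)) := by
      intro s g
      simp [hT_def, ContinuousLinearMap.sum_apply]
    -- the vector families
    have hv_orth : ∀ g : G, ∀ i j : ↥M, i ≠ j →
        (⟪(i : G →L[ℂ] H) ((adjoint (i : G →L[ℂ] H)) (x g)),
          (j : G →L[ℂ] H) ((adjoint (j : G →L[ℂ] H)) (x g))⟫_ℂ) = 0 := by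
      intro g i j hij
      have hadj : ∀ (u : H) (z : G), (⟪u, (j : G →L[ℂ] H) z⟫_ℂ)
          = ⟪adjoint (j : G →L[ℂ] H) u, z⟫_ℂ :=
        fun u z => (adjoint_inner_left (j : G →L[ℂ] H) z u).symm
      rw [hadj]
      have h0 : adjoint (j : G →L[ℂ] H) ((i : G →L[ℂ] H) ((adjoint (i : G →L[ℂ] H)) (x g)))
          = 0 := by
        have hne : (j : G →L[ℂ] H) ≠ (i : G →L[ℂ] H) := fun h => hij (Subtype.ext h.symm)
        have horthop := hMorth _ j.2 _ i.2 hne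
        have : adjoint (j : G →L[ℂ] H) ((i : G →L[ℂ] H) ((adjoint (i : G →L[ℂ] H)) (x g)))
            = (adjoint (j : G →L[ℂ] H) ∘L (i : G →L[ℂ] H)) ((adjoint (i : G →L[ℂ] H)) (x g)) :=
          rfl
        rw [this, horthop, ContinuousLinearMap.zero_apply]
      rw [h0, inner_zero_left]
    have hv_ip : ∀ g : G, ∀ i : ↥M,
        (⟪(i : G →L[ℂ] H) ((adjoint (i : G →L[ℂ] H)) (x g)),
          (i : G →L[ℂ] H) ((adjoint (i : G →L[ℂ] H)) (x g))⟫_ℂ)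
        = ⟪x g, (i : G →L[ℂ] H) ((adjoint (i : G →L[ℂ] H)) (x g))⟫_ℂ := by
      intro g i
      set f : G →L[ℂ] H := (i : G →L[ℂ] H) with hf_def
      set w : H := x g with hw_def
      have h1 : (⟪f (adjoint f w), f (adjoint f w)⟫_ℂ)
          = ⟪adjoint f (f (adjoint f w)), adjoint f w⟫_ℂ :=
        (adjoint_inner_left f (adjoint f w) (f (adjoint f w))).symm
      have h2 : adjoint f (f (adjoint f w)) = adjoint f w := by
        have h3 := congrArg (fun (S : H →L[ℂ] G) => S w) (hpf f i.2)
        simpa using h3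
      have h4 : (⟪w, f (adjoint f w)⟫_ℂ) = ⟪adjoint f w, adjoint f w⟫_ℂ :=
        (adjoint_inner_left f (adjoint f w) w).symm
      rw [h1, h2, h4]
    have hbessel : ∀ (g : G) (s : Finset ↥M),
        ∑ i ∈ s, ‖(i : G →L[ℂ] H) ((adjoint (i : G →L[ℂ] H)) (x g))‖ ^ 2 ≤ ‖x g‖ ^ 2 :=
      fun g s => bessel_bound _ (x g) (hv_orth g) (hv_ip g) s
    have hT_cauchy : ∀ g : G, CauchySeq (fun s : Finset ↥M => T s g) := by
      intro g
      have := cauchySeq_partial_sums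
        (fun i : ↥M => (i : G →L[ℂ] H) ((adjoint (i : G →L[ℂ] H)) (x g)))
        (‖x g‖ ^ 2) (hv_orth g) (hbessel g)
      have heq : (fun s : Finset ↥M => T s g)
          = fun s : Finset ↥M => ∑ i ∈ s, (i : G →L[ℂ] H) ((adjoint (i : G →L[ℂ] H)) (x g)) := by
        funext s
        exact hT_apply s g
      rw [heq]
      exact this
    have hT_bdd : ∀ (s : Finset ↥M) (g : G), ‖T s g‖ ≤ ‖x‖ * ‖g‖ := by
      intro s g
      have h1 : ‖T s g‖ ^ 2 ≤ ‖x g‖ ^ 2 := by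
        rw [hT_apply s g, norm_sum_sq_of_orthogonal _ (hv_orth g)]
        exact hbessel g s
      have h2 : ‖x g‖ ≤ ‖x‖ * ‖g‖ := x.le_opNorm g
      have h3 : ‖T s g‖ ≤ ‖x g‖ :=
        le_of_sq_le_sq (norm_nonneg _) (norm_nonneg _) h1
      exact h3.trans h2
    obtain ⟨P, hP⟩ := exists_sot_limit T ‖x‖ hT_bdd hT_cauchy
    have hTsE : ∀ s : Finset ↥M, T s ∈ E := by
      intro s
      apply Finset.sum_induction _ (· ∈ E) (fun u v hu hv => hadd u hu v hv) hzero
      intro i _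
      exact hmod _ (hME i.2) _ (hinner _ (hME i.2) x hx)
    set x' : G →L[ℂ] H := x - P with hx'_def
    have hx'E : x' ∈ E := by
      apply hclosed (Filter.map (fun s : Finset ↥M => x - T s) atTop) x' Filter.map_neBot
      · apply Filter.eventually_map.mpr
        apply Eventually.of_forall
        intro s
        have : x - T s = x + (-1 : ℂ) • T s := by
          rw [neg_one_smul, sub_eq_add_neg]
        rw [this]
        exact hadd x hx _ (hsmul (-1) _ (hTsE s))
      · intro g
        rw [tendsto_map'_iff]
        have : (fun s : Finset ↥M => (x - T s) g) = fun s => x g - T s g := by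
          funext s
          simp
        show Tendsto ((fun y : G →L[ℂ] H => y g) ∘ fun s => x - T s) atTop (𝓝 (x' g))
        have hx'g : x' g = x g - P g := by simp [hx'_def]
        rw [hx'g]
        have hsub2 : Tendsto (fun s : Finset ↥M => x g - T s g) atTop (𝓝 (x g - P g)) :=
          Filter.Tendsto.sub tendsto_const_nhds (hP g)
        have hfe : ((fun y : G →L[ℂ] H => y g) ∘ fun s : Finset ↥M => x - T s)
            = fun s : Finset ↥M => x g - T s g := by
          funext s
          simp
        rw [hfe]
        exact hsub2
    have hx'orth : ∀ f ∈ M, adjoint f ∘L x' = 0 := by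
      intro f hf
      ext g
      have hPg : Tendsto (fun s : Finset ↥M => adjoint f (T s g)) atTop
          (𝓝 (adjoint f (P g))) := ((adjoint f).continuous.tendsto _).comp (hP g)
      have hconst : ∀ᶠ s : Finset ↥M in atTop, adjoint f (T s g) = adjoint f (x g) := by
        rw [eventually_atTop]
        refine ⟨{(⟨f, hf⟩ : ↥M)}, fun s hs => ?_⟩
        have hmem : (⟨f, hf⟩ : ↥M) ∈ s := Finset.singleton_subset_iff.mp hs
        rw [hT_apply s g]
        rw [map_sum]
        rw [Finset.sum_eq_single (⟨f, hf⟩ : ↥M)]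
        · show adjoint f (f (adjoint f (x g))) = adjoint f (x g)
          have h3 := congrArg (fun (S : H →L[ℂ] G) => S (x g)) (hpf f hf)
          simpa using h3
        · intro j _ hj
          have hne : f ≠ (j : G →L[ℂ] H) := fun h => hj (Subtype.ext h.symm)
          have horthop := hMorth f hf _ j.2 hne
          have h5 : adjoint f ((j : G →L[ℂ] H) ((adjoint (j : G →L[ℂ] H)) (x g)))
              = (adjoint f ∘L (j : G →L[ℂ] H)) ((adjoint (j : G →L[ℂ] H)) (x g)) := rfl
          rw [h5, horthop, ContinuousLinearMap.zero_apply]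
        · intro h
          exact absurd hmem h
      have h6 : Tendsto (fun _ : Finset ↥M => adjoint f (x g)) atTop
          (𝓝 (adjoint f (P g))) := Filter.Tendsto.congr' hconst hPg
      have h7 : adjoint f (P g) = adjoint f (x g) :=
        tendsto_nhds_unique h6 tendsto_const_nhds
      show (adjoint f ∘L x') g = (0 : G →L[ℂ] G) g
      have h8 : (adjoint f ∘L x') g = adjoint f (x g) - adjoint f (P g) := by
        simp [hx'_def, map_sub]
      rw [h8, h7, sub_self, ContinuousLinearMap.zero_apply]
    have hx'zero : x' = 0 := by
      by_contra hne
      obtain ⟨enew, heE, heidem, hene, heorth⟩ :=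
        exists_new_element B E hclosed hmod hinner hx'E hne
      have heM : enew ∉ M := by
        intro hmem
        exact hene (heorth enew (hx'orth enew hmem))
      have hins : insert enew M ∈ 𝒮 := by
        refine ⟨?_, ?_, ?_, ?_⟩
        · rintro f (rfl | hf)
          · exact heE
          · exact hME hf
        · rintro f (rfl | hf) f' (rfl | hf') hne'
          · exact absurd rfl hne'
          · exact swap_orth (heorth f' (hx'orth f' hf'))
          · exact heorth f (hx'orth f hf)
          · exact hMorth f hf f' hf' hne'
        · rintro f (rfl | hf)
          · exact heidem
          · exact hMidem f hf
        · rintro f (rfl | hf)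
          · exact hene
          · exact hMne f hf
      have hsubM : insert enew M ⊆ M := hMmax.2 hins (Set.subset_insert enew M)
      exact heM (hsubM (Set.mem_insert enew M))
    intro g
    have hxP : x g = P g := by
      have h10 : x - P = 0 := hx'zero
      have h8 := congrArg (fun (S : G →L[ℂ] H) => S g) h10
      simp only [ContinuousLinearMap.sub_apply, ContinuousLinearMap.zero_apply] at h8
      exact sub_eq_zero.mp h8
    have h9 := hP g
    rw [← hxP] at h9
    have heq : (fun s : Finset ↥M =>
        ∑ i ∈ s, (i : G →L[ℂ] H) ((adjoint (i : G →L[ℂ] H)) (x g)))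
        = fun s => T s g := by
      funext s
      exact (hT_apply s g).symm
    rw [heq]
    exact h9
  have he₀inj : Function.Injective e₀ := by
    intro i j hij
    by_contra hne
    have h0 := he₀orth i j hne
    rw [hij] at h0
    exact he₀ne j h0
  refine ⟨↥M, fun i => (i : G →L[ℂ] H), fun i => ⟨e₀ i, hsub₀ (Set.mem_range_self i)⟩,
    ?_, ?_, ?_, ?_, ?_, ?_, ?_, ?_⟩
  · intro i j hij
    exact he₀inj (congrArg Subtype.val hij)
  · intro i
    rfl
  · intro i
    exact hME i.2
  · intro i j hij
    exact hMorth _ i.2 _ j.2 (fun h => hij (Subtype.ext h))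
  · intro i
    exact hMidem _ i.2
  · intro i
    exact hMne _ i.2
  · intro i
    exact hinner _ (hME i.2) _ (hME i.2)
  · exact hcomplete
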